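/- arXiv:1603.09050 — 8 statements merged into one kernel-verified Lean document; each statement's English description precedes it below -/
import Mathlib

section
/- Suppose the utility f_p is Lipschitz continuous in the prior with constant L and bounded by M. If A is an average-case α-approximate algorithm (0 < α ≤ 1), i.e., for every prior p, F(p, A(p)) ≥ α·max_π F(p,π), then for any true prior p0 and perturbed prior p1: F(p0, A(p1)) ≥ α·max_π F(p0,π) − (α+1)(L+M)·‖p1−p0‖. -/
open Finset

theorem stmt2 {H X P : Type*} [Fintype H] [Fintype X] [Fintype P] [Nonempty P]
    (f : (H → ℝ) → Finset X → H → ℝ) (L M α : ℝ)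
    (pol : P → H → Finset X)
    (hα : 0 < α) (hα1 : α ≤ 1)
    (hNonneg : ∀ (p : H → ℝ), (∀ h, 0 ≤ p h) → (∑ h, p h) = 1 →
      ∀ (S : Finset X) (h : H), 0 ≤ f p S h)
    (hLip : ∀ (p p' : H → ℝ), (∀ h, 0 ≤ p h) → (∑ h, p h) = 1 →
      (∀ h, 0 ≤ p' h) → (∑ h, p' h) = 1 →
      ∀ (S : Finset X) (h : H),
        |f p S h - f p' S h| ≤ L * ∑ h', |p h' - p' h'|)
    (hBound : ∀ (p : H → ℝ), (∀ h, 0 ≤ p h) → (∑ h, p h) = 1 →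
      ∀ (S : Finset X) (h : H), f p S h ≤ M)
    (A : (H → ℝ) → P)
    (hA : ∀ (p : H → ℝ), (∀ h, 0 ≤ p h) → (∑ h, p h) = 1 →
      (∑ h, p h * f p (pol (A p) h) h) ≥
        α * Finset.univ.sup' Finset.univ_nonempty
          (fun π => ∑ h, p h * f p (pol π h) h))
    (p0 p1 : H → ℝ)
    (hp0 : ∀ h, 0 ≤ p0 h) (hp0sum : (∑ h, p0 h) = 1)
    (hp1 : ∀ h, 0 ≤ p1 h) (hp1sum : (∑ h, p1 h) = 1) :
    (∑ h, p0 h * f p0 (pol (A p1) h) h) ≥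
      α * Finset.univ.sup' Finset.univ_nonempty
          (fun π => ∑ h, p0 h * f p0 (pol π h) h)
      - (α + 1) * (L + M) * ∑ h, |p1 h - p0 h| := by
  rcases isEmpty_or_nonempty H with hE | hH
  · simp at hp0sum
  set D := ∑ h, |p1 h - p0 h| with hD
  have hDsym : (∑ h, |p0 h - p1 h|) = D := by
    simp [hD, abs_sub_comm]
  have hM0 : 0 ≤ M := by
    obtain ⟨h0⟩ := hH
    exact le_trans (hNonneg p0 hp0 hp0sum ∅ h0) (hBound p0 hp0 hp0sum ∅ h0)
  have key : ∀ π : P, |(∑ h, p0 h * f p0 (pol π h) h) - (∑ h, p1 h * f p1 (pol π h) h)|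
      ≤ (L + M) * D := by
    intro π
    have hrw : (∑ h, p0 h * f p0 (pol π h) h) - (∑ h, p1 h * f p1 (pol π h) h)
        = ∑ h, ((p0 h - p1 h) * f p0 (pol π h) h
            + p1 h * (f p0 (pol π h) h - f p1 (pol π h) h)) := by
      rw [← Finset.sum_sub_distrib]
      exact Finset.sum_congr rfl fun h _ => by ring
    rw [hrw]
    calc |∑ h, ((p0 h - p1 h) * f p0 (pol π h) h
            + p1 h * (f p0 (pol π h) h - f p1 (pol π h) h))|
        ≤ ∑ h, |(p0 h - p1 h) * f p0 (pol π h) h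
            + p1 h * (f p0 (pol π h) h - f p1 (pol π h) h)| :=
          Finset.abs_sum_le_sum_abs _ _
      _ ≤ ∑ h, (|p0 h - p1 h| * M + p1 h * (L * D)) := by
          apply Finset.sum_le_sum
          intro h _
          refine le_trans (abs_add_le _ _) (add_le_add ?_ ?_)
          · rw [abs_mul]
            have h1 : |f p0 (pol π h) h| ≤ M := by
              rw [abs_of_nonneg (hNonneg p0 hp0 hp0sum _ _)]
              exact hBound p0 hp0 hp0sum _ _
            exact mul_le_mul_of_nonneg_left h1 (abs_nonneg _)
          · rw [abs_mul, abs_of_nonneg (hp1 h)]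
            apply mul_le_mul_of_nonneg_left _ (hp1 h)
            calc |f p0 (pol π h) h - f p1 (pol π h) h|
                ≤ L * ∑ h', |p0 h' - p1 h'| := hLip p0 p1 hp0 hp0sum hp1 hp1sum _ _
              _ = L * D := by rw [hDsym]
      _ = (L + M) * D := by
          rw [Finset.sum_add_distrib, ← Finset.sum_mul, ← Finset.sum_mul, hDsym, hp1sum]
          ring
  obtain ⟨π0, -, hπ0⟩ := Finset.exists_mem_eq_sup' (Finset.univ_nonempty (α := P))
      (fun π => ∑ h, p0 h * f p0 (pol π h) h)
  have hsup : Finset.univ.sup' Finset.univ_nonempty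
      (fun π => ∑ h, p1 h * f p1 (pol π h) h)
      ≥ Finset.univ.sup' Finset.univ_nonempty
          (fun π => ∑ h, p0 h * f p0 (pol π h) h) - (L + M) * D := by
    have h1 : (∑ h, p1 h * f p1 (pol π0 h) h)
        ≥ (∑ h, p0 h * f p0 (pol π0 h) h) - (L + M) * D := by
      have := key π0
      have := abs_le.mp this
      linarith [this.2]
    calc Finset.univ.sup' Finset.univ_nonempty
          (fun π => ∑ h, p1 h * f p1 (pol π h) h)
        ≥ ∑ h, p1 h * f p1 (pol π0 h) h :=
          Finset.le_sup' (fun π => ∑ h, p1 h * f p1 (pol π h) h) (Finset.mem_univ π0)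
      _ ≥ _ := by rw [hπ0]; linarith
  have hA1 := hA p1 hp1 hp1sum
  have hkeyA := abs_le.mp (key (A p1))
  have hmul : α * Finset.univ.sup' Finset.univ_nonempty
      (fun π => ∑ h, p1 h * f p1 (pol π h) h)
      ≥ α * (Finset.univ.sup' Finset.univ_nonempty
          (fun π => ∑ h, p0 h * f p0 (pol π h) h) - (L + M) * D) :=
    mul_le_mul_of_nonneg_left hsup (le_of_lt hα)
  nlinarith [hkeyA.1, hkeyA.2]
end

section
/- If A is an algorithm satisfying F(p, A(p)) ≥ (1−1/e)·max_π F(p,π) for every prior p (as the maximum Gibbs error algorithm does for the version space reduction utility), then for any true prior p0 and perturbed prior p1: F(p0, A(p1)) ≥ (1−1/e)·max_π F(p0,π) − (4 − 2/e)·‖p1−p0‖. -/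
open Finset

theorem stmt4 {X Y P : Type*} [Fintype X] [Fintype Y] [DecidableEq X] [DecidableEq Y]
    [Fintype P] [Nonempty P]
    (pol : P → (X → Y) → Finset X)
    (f : ((X → Y) → ℝ) → Finset X → (X → Y) → ℝ)
    (hf : ∀ p S h, f p S h =
      1 - ∑ h' ∈ Finset.univ.filter (fun h' : X → Y => ∀ s ∈ S, h' s = h s), p h')
    (A : ((X → Y) → ℝ) → P)
    (hA : ∀ (p : (X → Y) → ℝ), (∀ h, 0 ≤ p h) → (∑ h, p h) = 1 →
      (∑ h, p h * f p (pol (A p) h) h) ≥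
        (1 - 1 / Real.exp 1) * Finset.univ.sup' Finset.univ_nonempty
          (fun π => ∑ h, p h * f p (pol π h) h))
    (p0 p1 : (X → Y) → ℝ)
    (hp0 : ∀ h, 0 ≤ p0 h) (hp0sum : (∑ h, p0 h) = 1)
    (hp1 : ∀ h, 0 ≤ p1 h) (hp1sum : (∑ h, p1 h) = 1) :
    (∑ h, p0 h * f p0 (pol (A p1) h) h) ≥
      (1 - 1 / Real.exp 1) * Finset.univ.sup' Finset.univ_nonempty
          (fun π => ∑ h, p0 h * f p0 (pol π h) h)
      - (4 - 2 / Real.exp 1) * ∑ h, |p1 h - p0 h| := by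
  set d : ℝ := ∑ h, |p1 h - p0 h| with hd
  have hd0 : 0 ≤ d := Finset.sum_nonneg (fun _ _ => abs_nonneg _)
  -- bound of filtered sums
  have hsub : ∀ (q : (X → Y) → ℝ), (∀ h, 0 ≤ q h) → (∑ h, q h) = 1 →
      ∀ (T : Finset (X → Y)), 0 ≤ ∑ h' ∈ T, q h' ∧ (∑ h' ∈ T, q h') ≤ 1 := by
    intro q hq hqs T
    constructor
    · exact Finset.sum_nonneg (fun _ _ => hq _)
    · calc ∑ h' ∈ T, q h' ≤ ∑ h', q h' :=
            Finset.sum_le_sum_of_subset_of_nonneg (Finset.subset_univ T)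
              (fun i _ _ => hq i)
        _ = 1 := hqs
  have hfb : ∀ (q : (X → Y) → ℝ), (∀ h, 0 ≤ q h) → (∑ h, q h) = 1 →
      ∀ S h, 0 ≤ f q S h ∧ f q S h ≤ 1 := by
    intro q hq hqs S h
    rw [hf]
    obtain ⟨h1, h2⟩ := hsub q hq hqs (Finset.univ.filter (fun h' : X → Y => ∀ s ∈ S, h' s = h s))
    constructor <;> linarith
  have hfdiff : ∀ S h, |f p0 S h - f p1 S h| ≤ d := by
    intro S h
    rw [hf, hf]
    have : (1 - ∑ h' ∈ Finset.univ.filter (fun h' : X → Y => ∀ s ∈ S, h' s = h s), p0 h')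
        - (1 - ∑ h' ∈ Finset.univ.filter (fun h' : X → Y => ∀ s ∈ S, h' s = h s), p1 h')
        = ∑ h' ∈ Finset.univ.filter (fun h' : X → Y => ∀ s ∈ S, h' s = h s), (p1 h' - p0 h') := by
      rw [Finset.sum_sub_distrib]; ring
    rw [this]
    calc |∑ h' ∈ Finset.univ.filter (fun h' : X → Y => ∀ s ∈ S, h' s = h s), (p1 h' - p0 h')|
        ≤ ∑ h' ∈ Finset.univ.filter (fun h' : X → Y => ∀ s ∈ S, h' s = h s), |p1 h' - p0 h'| :=
          Finset.abs_sum_le_sum_abs _ _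
      _ ≤ d := Finset.sum_le_sum_of_subset_of_nonneg (Finset.subset_univ _)
            (fun i _ _ => abs_nonneg _)
  -- F stability: for any selection g
  have hFdiff : ∀ (g : (X → Y) → Finset X),
      |(∑ h, p0 h * f p0 (g h) h) - (∑ h, p1 h * f p1 (g h) h)| ≤ 2 * d := by
    intro g
    have : (∑ h, p0 h * f p0 (g h) h) - (∑ h, p1 h * f p1 (g h) h)
        = ∑ h, ((p0 h - p1 h) * f p0 (g h) h + p1 h * (f p0 (g h) h - f p1 (g h) h)) := by
      rw [← Finset.sum_sub_distrib]; congr 1; funext h; ring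
    rw [this]
    calc |∑ h, ((p0 h - p1 h) * f p0 (g h) h + p1 h * (f p0 (g h) h - f p1 (g h) h))|
        ≤ ∑ h, |(p0 h - p1 h) * f p0 (g h) h + p1 h * (f p0 (g h) h - f p1 (g h) h)| :=
          Finset.abs_sum_le_sum_abs _ _
      _ ≤ ∑ h, (|p1 h - p0 h| + p1 h * d) := by
          apply Finset.sum_le_sum
          intro h _
          have h1 := (hfb p0 hp0 hp0sum (g h) h)
          have h2 := hfdiff (g h) h
          have h3 : |(p0 h - p1 h) * f p0 (g h) h| ≤ |p1 h - p0 h| := by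
            rw [abs_mul, abs_sub_comm]
            have : |f p0 (g h) h| ≤ 1 := abs_le.mpr ⟨by linarith [h1.1], h1.2⟩
            nlinarith [abs_nonneg (p1 h - p0 h)]
          have h4 : |p1 h * (f p0 (g h) h - f p1 (g h) h)| ≤ p1 h * d := by
            rw [abs_mul, abs_of_nonneg (hp1 h)]
            exact mul_le_mul_of_nonneg_left h2 (hp1 h)
          calc |(p0 h - p1 h) * f p0 (g h) h + p1 h * (f p0 (g h) h - f p1 (g h) h)|
              ≤ |(p0 h - p1 h) * f p0 (g h) h| + |p1 h * (f p0 (g h) h - f p1 (g h) h)| :=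
                abs_add_le _ _
            _ ≤ |p1 h - p0 h| + p1 h * d := add_le_add h3 h4
      _ = d + d := by rw [Finset.sum_add_distrib, ← Finset.sum_mul, hp1sum]; ring
      _ = 2 * d := by ring
  set M0 : ℝ := Finset.univ.sup' Finset.univ_nonempty
      (fun π : P => ∑ h, p0 h * f p0 (pol π h) h) with hM0
  set M1 : ℝ := Finset.univ.sup' Finset.univ_nonempty
      (fun π : P => ∑ h, p1 h * f p1 (pol π h) h) with hM1
  have hMM : M0 - 2 * d ≤ M1 := by
    obtain ⟨π0, _, hπ0⟩ := Finset.exists_mem_eq_sup' (Finset.univ_nonempty)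
      (fun π : P => ∑ h, p0 h * f p0 (pol π h) h)
    have h1 : M1 ≥ ∑ h, p1 h * f p1 (pol π0 h) h :=
      Finset.le_sup' (fun π : P => ∑ h, p1 h * f p1 (pol π h) h) (Finset.mem_univ π0)
    have h2 := abs_le.mp (hFdiff (pol π0))
    rw [hM0, hπ0]
    linarith [h2.1]
  have he1 : (1:ℝ) ≤ Real.exp 1 := by
    have := Real.add_one_le_exp (1:ℝ); linarith
  have hc : 0 ≤ 1 - 1 / Real.exp 1 := by
    have : 1 / Real.exp 1 ≤ 1 := by
      rw [div_le_one (by positivity)]; exact he1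
    linarith
  have hAp1 := hA p1 hp1 hp1sum
  have hB := abs_le.mp (hFdiff (pol (A p1)))
  have key : (∑ h, p0 h * f p0 (pol (A p1) h) h)
      ≥ (1 - 1 / Real.exp 1) * (M0 - 2 * d) - 2 * d := by
    have := mul_le_mul_of_nonneg_left hMM hc
    linarith [hB.1]
  have : (1 - 1 / Real.exp 1) * (M0 - 2 * d) - 2 * d
      = (1 - 1 / Real.exp 1) * M0 - (4 - 2 / Real.exp 1) * d := by
    field_simp
    ring
  linarith [key, this.ge, this.le]
end

section
/- Suppose f_p is Lipschitz continuous in the prior with constant L. If A is a worst-case α-approximate algorithm (for every prior p, W(p, A(p)) ≥ α·max_π W(p,π)), then for any true prior p0 and perturbed prior p1: W(p0, A(p1)) ≥ α·max_π W(p0,π) − (α+1)·L·‖p1−p0‖. -/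
open Finset

theorem stmt6 {H X P : Type*} [Fintype H] [Nonempty H] [Fintype X] [Fintype P] [Nonempty P]
    (f : (H → ℝ) → Finset X → H → ℝ) (L α : ℝ)
    (pol : P → H → Finset X)
    (hα : 0 < α) (hα1 : α ≤ 1)
    (hNonneg : ∀ (p : H → ℝ), (∀ h, 0 ≤ p h) → (∑ h, p h) = 1 →
      ∀ (S : Finset X) (h : H), 0 ≤ f p S h)
    (hLip : ∀ (p p' : H → ℝ), (∀ h, 0 ≤ p h) → (∑ h, p h) = 1 →
      (∀ h, 0 ≤ p' h) → (∑ h, p' h) = 1 →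
      ∀ (S : Finset X) (h : H),
        |f p S h - f p' S h| ≤ L * ∑ h', |p h' - p' h'|)
    (A : (H → ℝ) → P)
    (hA : ∀ (p : H → ℝ), (∀ h, 0 ≤ p h) → (∑ h, p h) = 1 →
      Finset.univ.inf' Finset.univ_nonempty (fun h => f p (pol (A p) h) h) ≥
        α * Finset.univ.sup' Finset.univ_nonempty (fun π =>
          Finset.univ.inf' Finset.univ_nonempty (fun h => f p (pol π h) h)))
    (p0 p1 : H → ℝ)
    (hp0 : ∀ h, 0 ≤ p0 h) (hp0sum : (∑ h, p0 h) = 1)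
    (hp1 : ∀ h, 0 ≤ p1 h) (hp1sum : (∑ h, p1 h) = 1) :
    Finset.univ.inf' Finset.univ_nonempty (fun h => f p0 (pol (A p1) h) h) ≥
      α * Finset.univ.sup' Finset.univ_nonempty (fun π =>
        Finset.univ.inf' Finset.univ_nonempty (fun h => f p0 (pol π h) h))
      - (α + 1) * L * ∑ h, |p1 h - p0 h| := by
  set δ : ℝ := L * ∑ h, |p1 h - p0 h| with hδ
  have hsum : (∑ h', |p0 h' - p1 h'|) = ∑ h, |p1 h - p0 h| := by
    exact Finset.sum_congr rfl fun h _ => abs_sub_comm _ _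
  -- pointwise Lipschitz bound
  have key : ∀ (S : Finset X) (h : H), |f p0 S h - f p1 S h| ≤ δ := by
    intro S h
    have := hLip p0 p1 hp0 hp0sum hp1 hp1sum S h
    rwa [hsum] at this
  have hδ0 : 0 ≤ δ := le_trans (abs_nonneg _) (key ∅ Classical.ofNonempty)
  -- inf' comparisons
  have hinf01 : ∀ π : P,
      Finset.univ.inf' Finset.univ_nonempty (fun h => f p1 (pol π h) h) - δ ≤
        Finset.univ.inf' Finset.univ_nonempty (fun h => f p0 (pol π h) h) := by
    intro π
    apply Finset.le_inf'
    intro h _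
    have h1 : Finset.univ.inf' Finset.univ_nonempty (fun h => f p1 (pol π h) h) ≤
        f p1 (pol π h) h := Finset.inf'_le _ (Finset.mem_univ h)
    have h2 := abs_le.mp (key (pol π h) h)
    linarith [h2.1]
  have hinf10 : ∀ π : P,
      Finset.univ.inf' Finset.univ_nonempty (fun h => f p0 (pol π h) h) - δ ≤
        Finset.univ.inf' Finset.univ_nonempty (fun h => f p1 (pol π h) h) := by
    intro π
    apply Finset.le_inf'
    intro h _
    have h1 : Finset.univ.inf' Finset.univ_nonempty (fun h => f p0 (pol π h) h) ≤
        f p0 (pol π h) h := Finset.inf'_le _ (Finset.mem_univ h)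
    have h2 := abs_le.mp (key (pol π h) h)
    linarith [h2.2]
  -- sup comparison
  have hsup : Finset.univ.sup' Finset.univ_nonempty (fun π =>
      Finset.univ.inf' Finset.univ_nonempty (fun h => f p0 (pol π h) h)) - δ ≤
      Finset.univ.sup' Finset.univ_nonempty (fun π =>
      Finset.univ.inf' Finset.univ_nonempty (fun h => f p1 (pol π h) h)) := by
    rw [sub_le_iff_le_add]
    apply Finset.sup'_le
    intro π _
    have := hinf10 π
    have h1 : Finset.univ.inf' Finset.univ_nonempty (fun h => f p1 (pol π h) h) ≤
        Finset.univ.sup' Finset.univ_nonempty (fun π =>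
          Finset.univ.inf' Finset.univ_nonempty (fun h => f p1 (pol π h) h)) :=
      Finset.le_sup' (fun π => Finset.univ.inf' Finset.univ_nonempty (fun h => f p1 (pol π h) h)) (Finset.mem_univ π)
    linarith
  have hApprox := hA p1 hp1 hp1sum
  have hmain := hinf01 (A p1)
  have hmul : α * (Finset.univ.sup' Finset.univ_nonempty (fun π =>
      Finset.univ.inf' Finset.univ_nonempty (fun h => f p0 (pol π h) h)) - δ) ≤
      α * Finset.univ.sup' Finset.univ_nonempty (fun π =>
      Finset.univ.inf' Finset.univ_nonempty (fun h => f p1 (pol π h) h)) :=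
    mul_le_mul_of_nonneg_left hsup hα.le
  have : (α + 1) * L * ∑ h, |p1 h - p0 h| = (α + 1) * δ := by ring
  rw [ge_iff_le, this]
  nlinarith [hApprox, hmain, hmul]
end

section
/- If A satisfies W(p, A(p)) ≥ (1−1/e)·max_π W(p,π) for every prior p, where W uses the version space reduction utility, then for any true prior p0 and any perturbed prior p1: W(p0, A(p1)) ≥ (1−1/e)·max_π W(p0,π) − (2 − 1/e)·‖p1−p0‖. -/
open Finset

theorem stmt7 {X Y P : Type*} [Fintype X] [Fintype Y] [DecidableEq X] [DecidableEq Y]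
    [Nonempty Y] [Fintype P] [Nonempty P]
    (pol : P → (X → Y) → Finset X)
    (f : ((X → Y) → ℝ) → Finset X → (X → Y) → ℝ)
    (hf : ∀ p S h, f p S h =
      1 - ∑ h' ∈ Finset.univ.filter (fun h' : X → Y => ∀ s ∈ S, h' s = h s), p h')
    (A : ((X → Y) → ℝ) → P)
    (hA : ∀ (p : (X → Y) → ℝ), (∀ h, 0 ≤ p h) → (∑ h, p h) = 1 →
      Finset.univ.inf' Finset.univ_nonempty (fun h => f p (pol (A p) h) h) ≥
        (1 - 1 / Real.exp 1) * Finset.univ.sup' Finset.univ_nonempty (fun π =>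
          Finset.univ.inf' Finset.univ_nonempty (fun h => f p (pol π h) h)))
    (p0 p1 : (X → Y) → ℝ)
    (hp0 : ∀ h, 0 ≤ p0 h) (hp0sum : (∑ h, p0 h) = 1)
    (hp1 : ∀ h, 0 ≤ p1 h) (hp1sum : (∑ h, p1 h) = 1) :
    Finset.univ.inf' Finset.univ_nonempty (fun h => f p0 (pol (A p1) h) h) ≥
      (1 - 1 / Real.exp 1) * Finset.univ.sup' Finset.univ_nonempty (fun π =>
        Finset.univ.inf' Finset.univ_nonempty (fun h => f p0 (pol π h) h))
      - (2 - 1 / Real.exp 1) * ∑ h, |p1 h - p0 h| := by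
  set d : ℝ := ∑ h, |p1 h - p0 h| with hd
  have hdnn : 0 ≤ d := Finset.sum_nonneg fun _ _ => abs_nonneg _
  -- pointwise Lipschitz
  have key : ∀ S h, |f p1 S h - f p0 S h| ≤ d := by
    intro S h
    rw [hf, hf]
    have h1 : (1 - ∑ h' ∈ Finset.univ.filter (fun h' : X → Y => ∀ s ∈ S, h' s = h s), p1 h')
        - (1 - ∑ h' ∈ Finset.univ.filter (fun h' : X → Y => ∀ s ∈ S, h' s = h s), p0 h')
        = ∑ h' ∈ Finset.univ.filter (fun h' : X → Y => ∀ s ∈ S, h' s = h s),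
            (p0 h' - p1 h') := by
      rw [Finset.sum_sub_distrib]; ring
    rw [h1]
    calc |∑ h' ∈ Finset.univ.filter (fun h' : X → Y => ∀ s ∈ S, h' s = h s), (p0 h' - p1 h')|
        ≤ ∑ h' ∈ Finset.univ.filter (fun h' : X → Y => ∀ s ∈ S, h' s = h s), |p0 h' - p1 h'| :=
          Finset.abs_sum_le_sum_abs _ _
      _ ≤ ∑ h', |p0 h' - p1 h'| :=
          Finset.sum_le_sum_of_subset_of_nonneg (Finset.filter_subset _ _)
            (fun _ _ _ => abs_nonneg _)
      _ = d := by rw [hd]; exact Finset.sum_congr rfl fun h' _ => abs_sub_comm _ _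
  set W : ((X → Y) → ℝ) → P → ℝ := fun p π =>
    Finset.univ.inf' Finset.univ_nonempty (fun h => f p (pol π h) h) with hW
  set M : ((X → Y) → ℝ) → ℝ := fun p =>
    Finset.univ.sup' Finset.univ_nonempty (fun π => W p π) with hM
  have hWlip : ∀ π, |W p1 π - W p0 π| ≤ d := by
    intro π
    rw [abs_le]
    constructor
    · have : W p0 π - d ≤ W p1 π := by
        apply Finset.le_inf'
        intro h _
        have h1 : W p0 π ≤ f p0 (pol π h) h := Finset.inf'_le _ (Finset.mem_univ h)
        have := key (pol π h) h
        rw [abs_le] at this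
        linarith [this.1]
      linarith
    · have : W p1 π - d ≤ W p0 π := by
        apply Finset.le_inf'
        intro h _
        have h1 : W p1 π ≤ f p1 (pol π h) h := Finset.inf'_le _ (Finset.mem_univ h)
        have := key (pol π h) h
        rw [abs_le] at this
        linarith [this.2]
      linarith
  have hMlip : M p0 - d ≤ M p1 := by
    have : M p0 ≤ M p1 + d := by
      apply Finset.sup'_le
      intro π _
      have h1 : W p1 π ≤ M p1 := Finset.le_sup' _ (Finset.mem_univ π)
      have := hWlip π
      rw [abs_le] at this
      linarith [this.1]
    linarith
  have hc : (0:ℝ) ≤ 1 - 1 / Real.exp 1 := by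
    have h1 : (1:ℝ) < Real.exp 1 := by
      have := Real.exp_one_gt_d9; linarith
    have : 1 / Real.exp 1 < 1 := by
      rw [div_lt_one (by linarith)]; exact h1
    linarith
  have step1 : W p1 (A p1) ≥ (1 - 1 / Real.exp 1) * M p1 := hA p1 hp1 hp1sum
  have step2 : W p0 (A p1) ≥ W p1 (A p1) - d := by
    have := hWlip (A p1)
    rw [abs_le] at this
    linarith [this.2]
  have step3 : (1 - 1 / Real.exp 1) * M p1 ≥ (1 - 1 / Real.exp 1) * (M p0 - d) :=
    mul_le_mul_of_nonneg_left hMlip hc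
  have : W p0 (A p1) ≥ (1 - 1 / Real.exp 1) * M p0 - (2 - 1 / Real.exp 1) * d := by
    nlinarith
  exact this
end

section
/- If A satisfies T(p,A(p)) ≥ (1−1/e)·max_π T(p,π) for every prior p, where T(p,π) = min_h t_p(x^π_h,h) is the worst-case total generalized version space reduction with a loss bounded by m, then for any true prior p0 and perturbed prior p1: T(p0, A(p1)) ≥ (1−1/e)·max_π T(p0,π) − m(4 − 2/e)·‖p1−p0‖. -/
open Finset

theorem stmt9 {X Y P : Type*} [Fintype X] [Fintype Y] [DecidableEq X] [DecidableEq Y]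
    [Nonempty Y] [Fintype P] [Nonempty P]
    (m : ℝ) (hm : 0 ≤ m)
    (L : (X → Y) → (X → Y) → ℝ)
    (hLnonneg : ∀ h h', 0 ≤ L h h') (hLbound : ∀ h h', L h h' ≤ m)
    (hLsymm : ∀ h h', L h h' = L h' h) (hLdiag : ∀ h, L h h = 0)
    (pol : P → (X → Y) → Finset X)
    (t : ((X → Y) → ℝ) → Finset X → (X → Y) → ℝ)
    (ht : ∀ p S h, t p S h =
      ∑ h₁, ∑ h₂, if (¬ ∀ s ∈ S, h₁ s = h s) ∨ (¬ ∀ s ∈ S, h₂ s = h s) then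
        p h₁ * L h₁ h₂ * p h₂ else 0)
    (A : ((X → Y) → ℝ) → P)
    (hA : ∀ (p : (X → Y) → ℝ), (∀ h, 0 ≤ p h) → (∑ h, p h) = 1 →
      Finset.univ.inf' Finset.univ_nonempty (fun h => t p (pol (A p) h) h) ≥
        (1 - 1 / Real.exp 1) * Finset.univ.sup' Finset.univ_nonempty (fun π =>
          Finset.univ.inf' Finset.univ_nonempty (fun h => t p (pol π h) h)))
    (p0 p1 : (X → Y) → ℝ)
    (hp0 : ∀ h, 0 ≤ p0 h) (hp0sum : (∑ h, p0 h) = 1)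
    (hp1 : ∀ h, 0 ≤ p1 h) (hp1sum : (∑ h, p1 h) = 1) :
    Finset.univ.inf' Finset.univ_nonempty (fun h => t p0 (pol (A p1) h) h) ≥
      (1 - 1 / Real.exp 1) * Finset.univ.sup' Finset.univ_nonempty (fun π =>
        Finset.univ.inf' Finset.univ_nonempty (fun h => t p0 (pol π h) h))
      - m * (4 - 2 / Real.exp 1) * ∑ h, |p1 h - p0 h| := by
  set D : ℝ := ∑ h, |p1 h - p0 h| with hD
  have hDsymm : D = ∑ h, |p0 h - p1 h| := by
    simp [hD, abs_sub_comm]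
  have hDnonneg : 0 ≤ D := Finset.sum_nonneg fun h _ => abs_nonneg _
  -- key Lipschitz lemma
  have key : ∀ (p q : (X → Y) → ℝ), (∀ h, 0 ≤ p h) → (∑ h, p h) = 1 →
      (∀ h, 0 ≤ q h) → (∑ h, q h) = 1 →
      ∀ (S : Finset X) (h : X → Y),
        t p S h ≤ t q S h + 2 * m * ∑ h', |p h' - q h'| := by
    intro p q hp hps hq hqs S h
    rw [ht, ht]
    have step1 : (∑ h₁, ∑ h₂, if (¬ ∀ s ∈ S, h₁ s = h s) ∨ (¬ ∀ s ∈ S, h₂ s = h s) then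
          p h₁ * L h₁ h₂ * p h₂ else 0)
        - (∑ h₁, ∑ h₂, if (¬ ∀ s ∈ S, h₁ s = h s) ∨ (¬ ∀ s ∈ S, h₂ s = h s) then
          q h₁ * L h₁ h₂ * q h₂ else 0)
        ≤ ∑ h₁, ∑ h₂, (m * |p h₁ - q h₁| * q h₂ + m * p h₁ * |p h₂ - q h₂|) := by
      rw [← Finset.sum_sub_distrib]
      refine Finset.sum_le_sum fun h₁ _ => ?_
      rw [← Finset.sum_sub_distrib]
      refine Finset.sum_le_sum fun h₂ _ => ?_
      have hL0 := hLnonneg h₁ h₂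
      have hLm := hLbound h₁ h₂
      have ha1 : p h₁ - q h₁ ≤ |p h₁ - q h₁| := le_abs_self _
      have ha2 : p h₂ - q h₂ ≤ |p h₂ - q h₂| := le_abs_self _
      have e1 : (p h₁ - q h₁) * (L h₁ h₂ * q h₂) ≤ |p h₁ - q h₁| * (m * q h₂) := by
        calc (p h₁ - q h₁) * (L h₁ h₂ * q h₂) ≤ |p h₁ - q h₁| * (L h₁ h₂ * q h₂) :=
              mul_le_mul_of_nonneg_right ha1 (mul_nonneg hL0 (hq h₂))
          _ ≤ |p h₁ - q h₁| * (m * q h₂) :=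
              mul_le_mul_of_nonneg_left (mul_le_mul_of_nonneg_right hLm (hq h₂)) (abs_nonneg _)
      have e2 : p h₁ * (L h₁ h₂ * (p h₂ - q h₂)) ≤ p h₁ * (m * |p h₂ - q h₂|) := by
        refine mul_le_mul_of_nonneg_left ?_ (hp h₁)
        calc L h₁ h₂ * (p h₂ - q h₂) ≤ L h₁ h₂ * |p h₂ - q h₂| :=
              mul_le_mul_of_nonneg_left ha2 hL0
          _ ≤ m * |p h₂ - q h₂| := mul_le_mul_of_nonneg_right hLm (abs_nonneg _)
      have hrhs : 0 ≤ m * |p h₁ - q h₁| * q h₂ + m * p h₁ * |p h₂ - q h₂| :=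
        add_nonneg (mul_nonneg (mul_nonneg hm (abs_nonneg _)) (hq h₂))
          (mul_nonneg (mul_nonneg hm (hp h₁)) (abs_nonneg _))
      split_ifs with hc
      · nlinarith [e1, e2]
      · simpa using hrhs
    have step2 : (∑ h₁, ∑ h₂, (m * |p h₁ - q h₁| * q h₂ + m * p h₁ * |p h₂ - q h₂|))
        = 2 * m * ∑ h', |p h' - q h'| := by
      have : ∀ h₁ : X → Y, (∑ h₂, (m * |p h₁ - q h₁| * q h₂ + m * p h₁ * |p h₂ - q h₂|))
          = m * |p h₁ - q h₁| + m * p h₁ * ∑ h', |p h' - q h'| := by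
        intro h₁
        rw [Finset.sum_add_distrib, ← Finset.mul_sum, ← Finset.mul_sum, hqs, mul_one]
      rw [Finset.sum_congr rfl fun h₁ _ => this h₁, Finset.sum_add_distrib,
        ← Finset.mul_sum, ← Finset.sum_mul, ← Finset.mul_sum, hps]
      ring
    linarith [step1, step2.le, step2.ge]
  have epos : (0:ℝ) < Real.exp 1 := Real.exp_pos 1
  have hinv : 1 / Real.exp 1 ≤ 1 := by
    rw [div_le_one epos]
    linarith [Real.add_one_le_exp (1:ℝ)]
  have hc0 : 0 ≤ 1 - 1 / Real.exp 1 := by linarith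
  set T0 : P → ℝ := fun π => Finset.univ.inf' Finset.univ_nonempty
    (fun h => t p0 (pol π h) h) with hT0
  set T1 : P → ℝ := fun π => Finset.univ.inf' Finset.univ_nonempty
    (fun h => t p1 (pol π h) h) with hT1
  -- inf comparison both ways
  have infcomp : ∀ π : P, T0 π ≤ T1 π + 2 * m * D ∧ T1 π ≤ T0 π + 2 * m * D := by
    intro π
    constructor
    · obtain ⟨h, -, hh⟩ := Finset.exists_mem_eq_inf' (Finset.univ_nonempty)
        (fun h => t p1 (pol π h) h)
      have hk := key p0 p1 hp0 hp0sum hp1 hp1sum (pol π h) h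
      have h1 : T0 π ≤ t p0 (pol π h) h := Finset.inf'_le _ (Finset.mem_univ h)
      have h2 : T1 π = t p1 (pol π h) h := hh
      rw [hDsymm]; linarith
    · obtain ⟨h, -, hh⟩ := Finset.exists_mem_eq_inf' (Finset.univ_nonempty)
        (fun h => t p0 (pol π h) h)
      have hk := key p1 p0 hp1 hp1sum hp0 hp0sum (pol π h) h
      have h1 : T1 π ≤ t p1 (pol π h) h := Finset.inf'_le _ (Finset.mem_univ h)
      have h2 : T0 π = t p0 (pol π h) h := hh
      rw [hD]; linarith
  have supcomp : Finset.univ.sup' Finset.univ_nonempty T0 ≤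
      Finset.univ.sup' Finset.univ_nonempty T1 + 2 * m * D := by
    refine Finset.sup'_le _ _ fun π _ => ?_
    have := (infcomp π).1
    have h2 : T1 π ≤ Finset.univ.sup' Finset.univ_nonempty T1 :=
      Finset.le_sup' _ (Finset.mem_univ π)
    linarith
  have hAp1 := hA p1 hp1 hp1sum
  have main1 : T0 (A p1) ≥ T1 (A p1) - 2 * m * D := by linarith [(infcomp (A p1)).2]
  have main2 : T1 (A p1) ≥ (1 - 1 / Real.exp 1) * Finset.univ.sup' Finset.univ_nonempty T1 :=
    hAp1
  have main3 : (1 - 1 / Real.exp 1) * Finset.univ.sup' Finset.univ_nonempty T1 ≥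
      (1 - 1 / Real.exp 1) * Finset.univ.sup' Finset.univ_nonempty T0
        - (1 - 1 / Real.exp 1) * (2 * m * D) := by
    have := mul_le_mul_of_nonneg_left supcomp hc0
    nlinarith
  have hmD : 0 ≤ m * D := mul_nonneg hm hDnonneg
  have : T0 (A p1) ≥ (1 - 1 / Real.exp 1) * Finset.univ.sup' Finset.univ_nonempty T0
      - m * (4 - 2 / Real.exp 1) * D := by
    have expand : (1 - 1 / Real.exp 1) * (2 * m * D) + 2 * m * D
        = m * (4 - 2 / Real.exp 1) * D := by ring
    linarith
  exact this
end

section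
/- Suppose 0 ≤ c(π,h) ≤ K for all π, h. If A is an α(p)-approximate algorithm for the minimum cost problem, i.e., for every prior p, C(p, A(p)) ≤ α(p)·min_π C(p,π) with α(p) ≥ 1, then for any true prior p0 and perturbed prior p1: C(p0, A(p1)) ≤ α(p1)·min_π C(p0,π) + (α(p1)+1)·K·‖p1−p0‖. -/
open Finset

theorem stmt11 {H P : Type*} [Fintype H] [Fintype P] [Nonempty P]
    (c : P → H → ℝ) (K : ℝ)
    (hc0 : ∀ π h, 0 ≤ c π h) (hcK : ∀ π h, c π h ≤ K)
    (α : (H → ℝ) → ℝ)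
    (hα : ∀ p, 1 ≤ α p)
    (A : (H → ℝ) → P)
    (hA : ∀ (p : H → ℝ), (∀ h, 0 ≤ p h) → (∑ h, p h) = 1 →
      (∑ h, p h * c (A p) h) ≤
        α p * Finset.univ.inf' Finset.univ_nonempty (fun π => ∑ h, p h * c π h))
    (p0 p1 : H → ℝ)
    (hp0 : ∀ h, 0 ≤ p0 h) (hp0sum : (∑ h, p0 h) = 1)
    (hp1 : ∀ h, 0 ≤ p1 h) (hp1sum : (∑ h, p1 h) = 1) :
    (∑ h, p0 h * c (A p1) h) ≤
      α p1 * Finset.univ.inf' Finset.univ_nonempty (fun π => ∑ h, p0 h * c π h)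
      + (α p1 + 1) * K * ∑ h, |p1 h - p0 h| := by
  have hH : Nonempty H := by
    by_contra hn
    simp only [not_nonempty_iff] at hn
    rw [Finset.sum_of_isEmpty] at hp0sum
    norm_num at hp0sum
  obtain ⟨h0⟩ := hH
  have hK : 0 ≤ K := le_trans (hc0 (Classical.arbitrary P) h0) (hcK _ h0)
  set Δ := ∑ h, |p1 h - p0 h| with hΔ
  have hΔ0 : 0 ≤ Δ := Finset.sum_nonneg fun h _ => abs_nonneg _
  -- key perturbation bound
  have key : ∀ π : P, |(∑ h, p0 h * c π h) - (∑ h, p1 h * c π h)| ≤ K * Δ := by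
    intro π
    rw [← Finset.sum_sub_distrib]
    calc |∑ h, (p0 h * c π h - p1 h * c π h)| ≤ ∑ h, |p0 h * c π h - p1 h * c π h| :=
          Finset.abs_sum_le_sum_abs _ _
      _ ≤ ∑ h, |p1 h - p0 h| * K := by
          apply Finset.sum_le_sum
          intro h _
          rw [← sub_mul, abs_mul, abs_of_nonneg (hc0 π h), abs_sub_comm]
          exact mul_le_mul_of_nonneg_left (hcK π h) (abs_nonneg _)
      _ = K * Δ := by rw [← Finset.sum_mul, mul_comm]
  obtain ⟨πs, hπs, hmin⟩ := Finset.exists_mem_eq_inf' (Finset.univ_nonempty (α := P))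
    (fun π => ∑ h, p0 h * c π h)
  have hα1 : (1 : ℝ) ≤ α p1 := hα p1
  have step1 : (∑ h, p0 h * c (A p1) h) ≤ (∑ h, p1 h * c (A p1) h) + K * Δ := by
    have := key (A p1)
    linarith [abs_le.mp this |>.2, abs_le.mp this |>.1]
  have step2 : (∑ h, p1 h * c (A p1) h) ≤ α p1 * (∑ h, p1 h * c πs h) := by
    have h1 := hA p1 hp1 hp1sum
    have h2 : Finset.univ.inf' Finset.univ_nonempty (fun π => ∑ h, p1 h * c π h)
        ≤ ∑ h, p1 h * c πs h := Finset.inf'_le _ (Finset.mem_univ πs)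
    have hαpos : (0 : ℝ) ≤ α p1 := le_trans zero_le_one hα1
    nlinarith [h1, h2]
  have step3 : (∑ h, p1 h * c πs h) ≤ (∑ h, p0 h * c πs h) + K * Δ := by
    have := abs_le.mp (key πs)
    linarith
  have hinf : (∑ h, p0 h * c πs h) =
      Finset.univ.inf' Finset.univ_nonempty (fun π => ∑ h, p0 h * c π h) := hmin.symm
  have hαpos : (0 : ℝ) ≤ α p1 := le_trans zero_le_one hα1
  calc (∑ h, p0 h * c (A p1) h)
      ≤ α p1 * ((∑ h, p0 h * c πs h) + K * Δ) + K * Δ := by nlinarith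
    _ ≤ α p1 * (∑ h, p0 h * c πs h) + (α p1 + 1) * K * Δ := by ring_nf; nlinarith [mul_nonneg hK hΔ0]
    _ = _ := by rw [hinf]
end

section
/- Let A be an α(p)-approximate algorithm for the minimum cost problem, p0 a prior with p0[h] > 0 for all h ∈ H, and p1 = (1/k)Σ_i p_{1,i} a uniform mixture with p0 one of the components. Then C(p0, A(p1)) ≤ α(p1)·((k−1)/min_h p0[h] + 1)·min_π C(p0,π). -/
open Finset

theorem stmt15 {H P : Type*} [Fintype H] [Nonempty H] [Fintype P] [Nonempty P]
    (c : P → H → ℝ) (hc : ∀ π h, 0 ≤ c π h)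
    (α : (H → ℝ) → ℝ) (hα : ∀ p, 1 ≤ α p)
    (A : (H → ℝ) → P)
    (hA : ∀ (p : H → ℝ), (∀ h, 0 ≤ p h) → (∑ h, p h) = 1 →
      (∑ h, p h * c (A p) h) ≤
        α p * Finset.univ.inf' Finset.univ_nonempty (fun π => ∑ h, p h * c π h))
    (k : ℕ) (hk : 0 < k)
    (pc : Fin k → H → ℝ)
    (hpc : ∀ i, (∀ h, 0 ≤ pc i h) ∧ (∑ h, pc i h) = 1)
    (p0 p1 : H → ℝ)
    (hp1 : ∀ h, p1 h = (1 / (k : ℝ)) * ∑ i, pc i h)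
    (j : Fin k) (hp0 : p0 = pc j)
    (hp0pos : ∀ h, 0 < p0 h) :
    (∑ h, p0 h * c (A p1) h) ≤
      α p1 * (((k : ℝ) - 1) / Finset.univ.inf' Finset.univ_nonempty p0 + 1) *
        Finset.univ.inf' Finset.univ_nonempty (fun π => ∑ h, p0 h * c π h) := by
  have hkR : (0 : ℝ) < (k : ℝ) := by exact_mod_cast hk
  set m := Finset.univ.inf' Finset.univ_nonempty p0 with hm
  have hmpos : 0 < m := by
    obtain ⟨h0, -, he⟩ := Finset.exists_mem_eq_inf' (Finset.univ_nonempty (α := H)) p0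
    rw [hm, he]; exact hp0pos h0
  have hmle : ∀ h, m ≤ p0 h := fun h => Finset.inf'_le _ (Finset.mem_univ h)
  -- p1 is a valid prior
  have hp1nn : ∀ h, 0 ≤ p1 h := by
    intro h; rw [hp1]
    have : 0 ≤ ∑ i, pc i h := Finset.sum_nonneg fun i _ => (hpc i).1 h
    positivity
  have hp1sum : (∑ h, p1 h) = 1 := by
    simp only [hp1]
    rw [← Finset.mul_sum, Finset.sum_comm]
    rw [Finset.sum_congr rfl (fun i _ => (hpc i).2)]
    simp [Finset.sum_const]
    field_simp
  -- C(p0, q) ≤ k * C(p1, q)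
  set q := A p1 with hq
  have h1 : (∑ h, p0 h * c q h) ≤ (k : ℝ) * ∑ h, p1 h * c q h := by
    rw [Finset.mul_sum]
    refine Finset.sum_le_sum fun h _ => ?_
    have hle : p0 h ≤ (k : ℝ) * p1 h := by
      rw [hp1, ← mul_assoc, mul_one_div_cancel (ne_of_gt hkR), one_mul, hp0]
      exact Finset.single_le_sum (fun i _ => (hpc i).1 h) (Finset.mem_univ j)
    calc p0 h * c q h ≤ ((k : ℝ) * p1 h) * c q h :=
          mul_le_mul_of_nonneg_right hle (hc q h)
      _ = (k : ℝ) * (p1 h * c q h) := by ring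
  -- approximation guarantee at p1
  have h2 := hA p1 hp1nn hp1sum
  -- choose minimizer of C(p0, ·)
  obtain ⟨pis, -, hpis⟩ := Finset.exists_mem_eq_inf' (Finset.univ_nonempty (α := P))
    (fun π => ∑ h, p0 h * c π h)
  set C0 : ℝ := ∑ h, p0 h * c pis h with hC0
  have hC0nn : 0 ≤ C0 := by
    rw [hC0]
    exact Finset.sum_nonneg fun h _ => mul_nonneg (le_of_lt (hp0pos h)) (hc pis h)
  -- for any component i, C(pc i, pis) ≤ (1/m) * C0
  have hcomp : ∀ i : Fin k, (∑ h, pc i h * c pis h) ≤ (1 / m) * C0 := by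
    intro i
    have step1 : (∑ h, pc i h * c pis h) ≤ ∑ h, c pis h := by
      refine Finset.sum_le_sum fun h _ => ?_
      have h1' : pc i h ≤ 1 := by
        rw [← (hpc i).2]
        exact Finset.single_le_sum (fun h' _ => (hpc i).1 h') (Finset.mem_univ h)
      nlinarith [hc pis h, (hpc i).1 h]
    have step2 : (∑ h, c pis h) ≤ (1 / m) * C0 := by
      rw [hC0, Finset.mul_sum]
      refine Finset.sum_le_sum fun h _ => ?_
      have := hmle h
      have := hc pis h
      rw [div_mul_eq_mul_div, one_mul, le_div_iff₀ hmpos]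
      nlinarith
    exact step1.trans step2
  -- C(p1, pis) ≤ (1/k) * (1 + (k-1)/m) * C0
  have h3 : (∑ h, p1 h * c pis h) ≤ (1 / (k : ℝ)) * (C0 + ((k : ℝ) - 1) * ((1 / m) * C0)) := by
    have e1 : (∑ h, p1 h * c pis h) = (1 / (k : ℝ)) * ∑ i, ∑ h, pc i h * c pis h := by
      simp only [hp1, Finset.sum_mul, Finset.mul_sum, mul_assoc]
      exact Finset.sum_comm
    rw [e1]
    refine mul_le_mul_of_nonneg_left ?_ (by positivity)
    have esplit : (∑ i, ∑ h, pc i h * c pis h)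
        = (∑ h, pc j h * c pis h) + ∑ i ∈ Finset.univ.erase j, ∑ h, pc i h * c pis h := by
      rw [← Finset.add_sum_erase _ _ (Finset.mem_univ j)]
    rw [esplit]
    have t1 : (∑ h, pc j h * c pis h) = C0 := by
      rw [hC0, hp0]
    have t2 : (∑ i ∈ Finset.univ.erase j, ∑ h, pc i h * c pis h)
        ≤ ((k : ℝ) - 1) * ((1 / m) * C0) := by
      calc (∑ i ∈ Finset.univ.erase j, ∑ h, pc i h * c pis h)
          ≤ ∑ i ∈ Finset.univ.erase j, (1 / m) * C0 :=
            Finset.sum_le_sum fun i _ => hcomp i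
        _ = ((Finset.univ.erase j).card : ℝ) * ((1 / m) * C0) := by
            rw [Finset.sum_const, nsmul_eq_mul]
        _ = ((k : ℝ) - 1) * ((1 / m) * C0) := by
            rw [Finset.card_erase_of_mem (Finset.mem_univ j)]
            simp [Fintype.card_fin]
            rw [Nat.cast_sub hk]
            simp
    linarith
  -- inf over policies at p1 is ≤ value at pis
  have h4 : Finset.univ.inf' Finset.univ_nonempty (fun π => ∑ h, p1 h * c π h)
      ≤ ∑ h, p1 h * c pis h := Finset.inf'_le _ (Finset.mem_univ pis)
  have hαnn : 0 ≤ α p1 := le_trans zero_le_one (hα p1)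
  calc (∑ h, p0 h * c q h)
      ≤ (k : ℝ) * ∑ h, p1 h * c q h := h1
    _ ≤ (k : ℝ) * (α p1 * Finset.univ.inf' Finset.univ_nonempty
          (fun π => ∑ h, p1 h * c π h)) := by
        exact mul_le_mul_of_nonneg_left h2 (le_of_lt hkR)
    _ ≤ (k : ℝ) * (α p1 * ∑ h, p1 h * c pis h) :=
        mul_le_mul_of_nonneg_left (mul_le_mul_of_nonneg_left h4 hαnn) (le_of_lt hkR)
    _ ≤ (k : ℝ) * (α p1 * ((1 / (k : ℝ)) * (C0 + ((k : ℝ) - 1) * ((1 / m) * C0)))) :=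
        mul_le_mul_of_nonneg_left (mul_le_mul_of_nonneg_left h3 hαnn) (le_of_lt hkR)
    _ = α p1 * (((k : ℝ) - 1) / m + 1) * C0 := by
        rw [hC0]; field_simp; ring
    _ = α p1 * (((k : ℝ) - 1) / m + 1) *
        Finset.univ.inf' Finset.univ_nonempty (fun π => ∑ h, p0 h * c π h) := by
        rw [hC0, hpis]
end

section
/- For the non-Lipschitz counting utility f_p(S,h) = |{h' : p[h'] > 0 and h'(S) ≠ h(S)}| on a 4-hypothesis, 2-example instance, exact algorithms on perturbed priors fail to be robust: for every C, α, ε > 0 there is a perturbed prior p1 with 0 < ‖p1 − p0‖ < ε and a policy π1 that is optimal for the average-case objective under p1, yet F(p0, π1) < α·max_π F(p0,π) − C·‖p1−p0‖. -/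
open Finset

/-- The counting utility: number of hypotheses with positive prior probability that
disagree with `h` on some example in `S`. -/
noncomputable def cntUtil (p : (Fin 2 → Fin 2) → ℝ) (S : Finset (Fin 2))
    (h : Fin 2 → Fin 2) : ℝ :=
  ((Finset.univ.filter (fun h' : Fin 2 → Fin 2 => 0 < p h' ∧ ∃ s ∈ S, h' s ≠ h s)).card : ℝ)

/-- Average-case objective of the policy querying example `i` (budget 1). -/
noncomputable def cntF (p : (Fin 2 → Fin 2) → ℝ) (i : Fin 2) : ℝ :=
  ∑ h : Fin 2 → Fin 2, p h * cntUtil p ({i} : Finset (Fin 2)) h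

/-- The true prior: probability 1/2 on each of the two hypotheses labeling `x1` with 0. -/
noncomputable def cntP0 : (Fin 2 → Fin 2) → ℝ :=
  fun h => if h 1 = 0 then 1 / 2 else 0

lemma sum4 (f : (Fin 2 → Fin 2) → ℝ) :
    ∑ h, f h = f ![0,0] + f ![0,1] + f ![1,0] + f ![1,1] := by
  have huniv : (univ : Finset (Fin 2 → Fin 2)) = {![0,0], ![0,1], ![1,0], ![1,1]} := by decide
  rw [huniv, Finset.sum_insert (by decide), Finset.sum_insert (by decide),
    Finset.sum_insert (by decide), Finset.sum_singleton]
  ring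

lemma cntUtil_pos (p : (Fin 2 → Fin 2) → ℝ) (hp : ∀ h, 0 < p h) (i : Fin 2)
    (h : Fin 2 → Fin 2) : cntUtil p ({i} : Finset (Fin 2)) h = 2 := by
  unfold cntUtil
  rw [Finset.filter_congr (q := fun h' => h' i ≠ h i) (fun x _ => by simp [hp x])]
  fin_cases i <;> fin_cases h <;> (norm_cast)

lemma cntUtil_p0 (S : Finset (Fin 2)) (h : Fin 2 → Fin 2) :
    cntUtil cntP0 S h =
      ((Finset.univ.filter (fun h' : Fin 2 → Fin 2 => h' 1 = 0 ∧ ∃ s ∈ S, h' s ≠ h s)).card : ℝ) := by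
  unfold cntUtil
  rw [Finset.filter_congr (q := fun h' => h' 1 = 0 ∧ ∃ s ∈ S, h' s ≠ h s)
    (fun x _ => by by_cases hx : x 1 = 0 <;> simp [cntP0, hx])]

lemma cntF_p0_0 : cntF cntP0 0 = 1 := by
  unfold cntF
  rw [sum4, cntUtil_p0, cntUtil_p0, cntUtil_p0, cntUtil_p0]
  norm_num [cntP0]
  rw [show (filter (fun h' : Fin 2 → Fin 2 => h' 1 = 0 ∧ ¬h' 0 = 0) univ).card = 1 from by decide,
    show (filter (fun h' : Fin 2 → Fin 2 => h' 1 = 0 ∧ ¬h' 0 = 1) univ).card = 1 from by decide]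
  norm_num

lemma cntF_p0_1 : cntF cntP0 1 = 0 := by
  unfold cntF
  rw [sum4, cntUtil_p0, cntUtil_p0, cntUtil_p0, cntUtil_p0]
  norm_num [cntP0]

theorem stmt17 :
    ∀ C α ε : ℝ, 0 < C → 0 < α → 0 < ε →
      ∃ p1 : (Fin 2 → Fin 2) → ℝ,
        (∀ h, 0 ≤ p1 h) ∧ (∑ h, p1 h) = 1 ∧
        0 < (∑ h, |p1 h - cntP0 h|) ∧ (∑ h, |p1 h - cntP0 h|) < ε ∧
        (∀ i : Fin 2, cntF p1 1 ≥ cntF p1 i) ∧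
        cntF cntP0 1 < α * max (cntF cntP0 0) (cntF cntP0 1)
          - C * (∑ h, |p1 h - cntP0 h|) := by
  intro C α ε hC hα hε
  set δ : ℝ := min (min (ε / 8) (1 / 4)) (α / (8 * C)) with hδdef
  have hδpos : 0 < δ := lt_min (lt_min (by linarith) (by norm_num)) (by positivity)
  have hδ4 : δ ≤ 1 / 4 := le_trans (min_le_left _ _) (min_le_right _ _)
  have hδε : δ ≤ ε / 8 := le_trans (min_le_left _ _) (min_le_left _ _)
  have hδα : δ ≤ α / (8 * C) := min_le_right _ _
  have habs : (∑ h, |(fun h : Fin 2 → Fin 2 => if h 1 = 0 then 1 / 2 - δ else δ) h - cntP0 h|)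
      = 4 * δ := by
    rw [sum4]
    norm_num [cntP0]
    rw [abs_of_pos hδpos]
    ring
  refine ⟨fun h => if h 1 = 0 then 1 / 2 - δ else δ, ?_, ?_, ?_, ?_, ?_, ?_⟩
  · intro h; show (0:ℝ) ≤ if h 1 = 0 then 1 / 2 - δ else δ; split_ifs <;> linarith
  · rw [sum4]; norm_num; ring
  · rw [habs]; linarith
  · rw [habs]; linarith
  · intro i
    have hp : ∀ h : Fin 2 → Fin 2, 0 < (if h 1 = 0 then (1:ℝ) / 2 - δ else δ) := by
      intro h; split_ifs <;> linarith
    have key : ∀ j : Fin 2, cntF (fun h => if h 1 = 0 then 1 / 2 - δ else δ) j = 2 := by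
      intro j
      unfold cntF
      have hu : ∀ h : Fin 2 → Fin 2,
          cntUtil (fun h => if h 1 = 0 then 1 / 2 - δ else δ) ({j} : Finset (Fin 2)) h = 2 :=
        cntUtil_pos _ hp j
      rw [sum4, hu, hu, hu, hu]
      norm_num
      ring
    rw [key i, key 1]
  · rw [habs, cntF_p0_0, cntF_p0_1]
    have hmax : max (1:ℝ) 0 = 1 := by norm_num
    rw [hmax]
    have hCδ : C * δ ≤ α / 8 := by
      have h1 : C * δ ≤ C * (α / (8 * C)) := mul_le_mul_of_nonneg_left hδα hC.le
      have h2 : C * (α / (8 * C)) = α / 8 := by field_simp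
      linarith
    nlinarith
end
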